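/- arXiv:2205.01493 — 3 statements merged into one kernel-verified Lean document; each statement's English description precedes it below -/
import Mathlib

section
/- Let E be a complex inner product space, let A and B be symmetric linear operators on E, and let ψ ∈ E with ‖ψ‖ = 1. Define the expectation values ⟨A⟩ = ⟪ψ, A ψ⟫ and ⟨B⟩ = ⟪ψ, B ψ⟫, and the standard deviations σ_A = ‖A ψ - ⟨A⟩ • ψ‖ and σ_B = ‖B ψ - ⟨B⟩ • ψ‖. Then σ_A · σ_B ≥ (1/2) · ‖⟪ψ, (A ∘ B - B ∘ A) ψ⟫‖, i.e. the product of the standard deviations of two symmetric operators in a normalized state is bounded below by half the absolute value of the expectation of their commutator (the Robertson uncertainty relation, which is the abstract form of the paper's Theorem 1). -/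
/-- **Robertson uncertainty relation** (abstract form of the paper's Theorem 1).
For symmetric operators `A`, `B` on a complex inner ℂ product space and a normalized
state `ψ`, the product of the standard deviations
`σ_A = ‖A ψ - ⟨A⟩ • ψ‖` and `σ_B = ‖B ψ - ⟨B⟩ • ψ‖` (with `⟨A⟩ = ⟪ψ, A ψ⟫`)
is at least half the norm of the commutator expectation. -/
theorem robertson_uncertainty {E : Type*} [NormedAddCommGroup E] [InnerProductSpace ℂ E]
    (A B : E →ₗ[ℂ] E)
    (hA : ∀ x y : E, (inner ℂ (A x) y : ℂ) = inner ℂ x (A y))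
    (hB : ∀ x y : E, (inner ℂ (B x) y : ℂ) = inner ℂ x (B y))
    (ψ : E) (hψ : ‖ψ‖ = 1) :
    ‖A ψ - (inner ℂ ψ (A ψ) : ℂ) • ψ‖ * ‖B ψ - (inner ℂ ψ (B ψ) : ℂ) • ψ‖ ≥
      (1 / 2) * ‖(inner ℂ ψ ((A ∘ₗ B - B ∘ₗ A) ψ) : ℂ)‖ := by
  set α : ℂ := inner ℂ ψ (A ψ) with hα
  set β : ℂ := inner ℂ ψ (B ψ) with hβ
  set a : E := A ψ - α • ψ with ha
  set b : E := B ψ - β • ψ with hb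
  have hψ2 : (inner ℂ ψ ψ : ℂ) = 1 := by
    rw [inner_self_eq_norm_sq_to_K, hψ]; norm_num
  have hαc : (starRingEnd ℂ) α = α := by
    rw [hα, inner_conj_symm, hA]
  have hβc : (starRingEnd ℂ) β = β := by
    rw [hβ, inner_conj_symm, hB]
  have hAψψ : (inner ℂ (A ψ) ψ : ℂ) = α := hA ψ ψ
  have hBψψ : (inner ℂ (B ψ) ψ : ℂ) = β := hB ψ ψ
  have hab : (inner ℂ a b : ℂ) = inner ℂ (A ψ) (B ψ) - α * β := by
    simp only [ha, hb, inner_sub_left, inner_sub_right, inner_smul_left, inner_smul_right,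
      hψ2, hαc, hAψψ]
    ring
  have hba : (inner ℂ b a : ℂ) = inner ℂ (B ψ) (A ψ) - α * β := by
    simp only [ha, hb, inner_sub_left, inner_sub_right, inner_smul_left, inner_smul_right,
      hψ2, hβc, hBψψ]
    ring
  have hcomm : (inner ℂ ψ ((A ∘ₗ B - B ∘ₗ A) ψ) : ℂ) = inner ℂ a b - inner ℂ b a := by
    rw [hab, hba]
    simp only [LinearMap.sub_apply, LinearMap.comp_apply, inner_sub_right, ← hA, ← hB]
    ring
  have h1 : ‖(inner ℂ a b : ℂ)‖ ≤ ‖a‖ * ‖b‖ := norm_inner_le_norm a b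
  have h2 : ‖(inner ℂ b a : ℂ)‖ ≤ ‖a‖ * ‖b‖ := by
    rw [mul_comm]; exact norm_inner_le_norm b a
  have hle : ‖(inner ℂ a b : ℂ) - inner ℂ b a‖ ≤ 2 * (‖a‖ * ‖b‖) := by
    calc ‖(inner ℂ a b : ℂ) - inner ℂ b a‖ ≤ ‖(inner ℂ a b : ℂ)‖ + ‖(inner ℂ b a : ℂ)‖ :=
          norm_sub_le _ _
      _ ≤ 2 * (‖a‖ * ‖b‖) := by linarith
  rw [ge_iff_le, hcomm]
  linarith
end

section
/- Let E be a complex inner product space, let A and B be symmetric linear operators on E, and let ψ ∈ E. Then ‖A ψ‖ · ‖B ψ‖ ≥ (1/2) · ‖⟪ψ, (A ∘ B - B ∘ A) ψ⟫‖. (This is the uncentered commutator bound, Eq. (16) of the paper, from which the uncertainty relation follows by replacing A and B with their centered versions.) -/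
/-- **Uncentered commutator bound** (Eq. (16) of the paper).
For symmetric operators `A`, `B` on a complex inner product space and any `ψ`,
`‖A ψ‖ · ‖B ψ‖ ≥ (1/2) · ‖⟪ψ, [A, B] ψ⟫‖`. -/
theorem uncentered_commutator_bound {E : Type*} [NormedAddCommGroup E] [InnerProductSpace ℂ E]
    (A B : E →ₗ[ℂ] E)
    (hA : ∀ x y : E, (inner ℂ (A x) y : ℂ) = inner ℂ x (A y))
    (hB : ∀ x y : E, (inner ℂ (B x) y : ℂ) = inner ℂ x (B y))
    (ψ : E) :
    ‖A ψ‖ * ‖B ψ‖ ≥ (1 / 2) * ‖(inner ℂ ψ ((A ∘ₗ B - B ∘ₗ A) ψ) : ℂ)‖ := by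
  set z : ℂ := inner ℂ (A ψ) (B ψ) with hz
  have key : (inner ℂ ψ ((A ∘ₗ B - B ∘ₗ A) ψ) : ℂ) = z - starRingEnd ℂ z := by
    simp only [LinearMap.sub_apply, LinearMap.comp_apply, inner_sub_right]
    rw [← hA ψ (B ψ), ← hB ψ (A ψ), hz, ← inner_conj_symm (B ψ) (A ψ)]
  have h1 : ‖z - starRingEnd ℂ z‖ ≤ 2 * ‖z‖ := by
    calc ‖z - starRingEnd ℂ z‖ ≤ ‖z‖ + ‖starRingEnd ℂ z‖ := norm_sub_le _ _
    _ = 2 * ‖z‖ := by rw [RingHomIsometric.norm_map]; ring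
  have h2 : ‖z‖ ≤ ‖A ψ‖ * ‖B ψ‖ := norm_inner_le_norm _ _
  rw [key, ge_iff_le]
  nlinarith
end

section
/- Let E be a complex inner product space, let A and B be symmetric linear operators on E, and let ψ ∈ E. Then ‖A ψ‖² + ‖B ψ‖² ≥ |(Complex.I * ⟪ψ, (A ∘ B - B ∘ A) ψ⟫).re|. (This is the positivity step, Eq. (15) of the paper: the nonnegativity of ⟨(a ∓ i b)²⟩ expanded using the symmetry of a and b.) -/
/-- **Positivity step** (Eq. (15) of the paper).
For symmetric operators `A`, `B` on a complex inner product space and any `ψ`,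
`‖A ψ‖² + ‖B ψ‖² ≥ |Re (i · ⟪ψ, [A, B] ψ⟫)|`. -/
theorem positivity_step {E : Type*} [NormedAddCommGroup E] [InnerProductSpace ℂ E]
    (A B : E →ₗ[ℂ] E)
    (hA : ∀ x y : E, (inner ℂ (A x) y : ℂ) = inner ℂ x (A y))
    (hB : ∀ x y : E, (inner ℂ (B x) y : ℂ) = inner ℂ x (B y))
    (ψ : E) :
    ‖A ψ‖ ^ 2 + ‖B ψ‖ ^ 2 ≥
      |(Complex.I * (inner ℂ ψ ((A ∘ₗ B - B ∘ₗ A) ψ) : ℂ)).re| := by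
  set c : ℂ := inner ℂ (A ψ) (B ψ) with hc
  have h1 : (inner ℂ ψ ((A ∘ₗ B - B ∘ₗ A) ψ) : ℂ) = c - (starRingEnd ℂ) c := by
    simp only [LinearMap.sub_apply, LinearMap.comp_apply, inner_sub_right]
    rw [← hA ψ (B ψ), ← hB ψ (A ψ), hc, inner_conj_symm]
  rw [h1]
  have h2 : (Complex.I * (c - (starRingEnd ℂ) c)).re = -2 * c.im := by
    simp [Complex.sub_re, Complex.sub_im, Complex.conj_re, Complex.conj_im]
    ring
  rw [h2]
  have h3 : |(-2 : ℝ) * c.im| = 2 * |c.im| := by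
    rw [abs_mul]; norm_num
  rw [ge_iff_le, h3]
  have h4 : |c.im| ≤ ‖c‖ := Complex.abs_im_le_norm c
  have h5 : ‖c‖ ≤ ‖A ψ‖ * ‖B ψ‖ := by
    exact norm_inner_le_norm _ _
  have h6 : 2 * (‖A ψ‖ * ‖B ψ‖) ≤ ‖A ψ‖ ^ 2 + ‖B ψ‖ ^ 2 := by
    nlinarith [sq_nonneg (‖A ψ‖ - ‖B ψ‖)]
  nlinarith
end
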